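/- For every k ≥ 1 and m ≥ 1 and odd prime p, the number 2^k·p^m is deficient, perfect, or pseudoperfect; in particular it is never weird. -/

import Mathlib

/-- Sum of the positive divisors of `n`. -/
def sigma' (n : ℕ) : ℕ := ∑ d ∈ n.divisors, d

/-- `n` is abundant if `σ(n) > 2n`. -/
def Abundant (n : ℕ) : Prop := 2 * n < sigma' n

/-- `n` is pseudoperfect (in the weak sense) if some subset of its proper divisors sums to `n`. -/
def Pseudoperfect (n : ℕ) : Prop := ∃ s ⊆ n.properDivisors, ∑ d ∈ s, d = n

/-- `n` is weird if it is abundant and no subset of its proper divisors sums to `n`. -/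
def Weird (n : ℕ) : Prop := Abundant n ∧ ¬ Pseudoperfect n

open Finset

lemma sum_range_two_pow (n : ℕ) : ∑ i ∈ range n, 2 ^ i = 2 ^ n - 1 := by
  induction n with
  | zero => simp
  | succ n ih =>
    rw [Finset.sum_range_succ, ih]
    have : 0 < 2 ^ n := Nat.pow_pos (by norm_num)
    have : 2 ^ (n + 1) = 2 * 2 ^ n := by ring
    omega

/-- Every `t ≤ 2^(k+1) - 1` is a sum of distinct powers of two from `{2^0, …, 2^k}`. -/
lemma bin_rep (k : ℕ) : ∀ t, t ≤ 2 ^ (k + 1) - 1 →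
    ∃ s ⊆ range (k + 1), ∑ i ∈ s, 2 ^ i = t := by
  induction k with
  | zero =>
    intro t ht
    interval_cases t
    · exact ⟨∅, by simp, by simp⟩
    · exact ⟨{0}, by simp, by simp⟩
  | succ k ih =>
    intro t ht
    by_cases h : t ≤ 2 ^ (k + 1) - 1
    · obtain ⟨s, hs, hsum⟩ := ih t h
      exact ⟨s, hs.trans (Finset.range_subset_range.2 (by omega)), hsum⟩
    · have hp : 0 < 2 ^ (k + 1) := Nat.pow_pos (by norm_num)
      have he : 2 ^ (k + 2) = 2 * 2 ^ (k + 1) := by ring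
      obtain ⟨s, hs, hsum⟩ := ih (t - 2 ^ (k + 1)) (by omega)
      have hnot : k + 1 ∉ s := fun hmem => by
        have := hs hmem; simp [Finset.mem_range] at this
      refine ⟨insert (k + 1) s, ?_, ?_⟩
      · intro x hx
        rcases Finset.mem_insert.1 hx with rfl | hx
        · simp
        · exact Finset.range_subset_range.2 (by omega) (hs hx)
      · rw [Finset.sum_insert hnot, hsum]; omega

lemma sigma'_two_pow_mul (p k j : ℕ) (hp : p.Prime) (hop : Odd p) :
    sigma' (2 ^ k * p ^ j) = (2 ^ (k + 1) - 1) * ∑ i ∈ range (j + 1), p ^ i := by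
  have hco : (Nat.Coprime (2 ^ k) (p ^ j)) :=
    Nat.Coprime.pow _ _ (Nat.coprime_two_left.2 hop)
  unfold sigma'
  rw [Nat.Coprime.sum_divisors_mul hco,
    Nat.sum_divisors_prime_pow Nat.prime_two, Nat.sum_divisors_prime_pow hp,
    sum_range_two_pow]

/-- `2^k * p^j` is practical when `p ≤ 2^(k+1) - 1`: every `t ≤ σ(2^k p^j)` is a sum of
distinct divisors. -/
lemma practical (p : ℕ) (hp : p.Prime) (hop : Odd p) (k : ℕ) (hpk : p ≤ 2 ^ (k + 1) - 1) :
    ∀ j t, t ≤ sigma' (2 ^ k * p ^ j) →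
      ∃ s ⊆ (2 ^ k * p ^ j).divisors, ∑ d ∈ s, d = t := by
  have hp1 : 1 < p := hp.one_lt
  have hppos : 0 < p := hp.pos
  intro j
  induction j with
  | zero =>
    intro t ht
    rw [sigma'_two_pow_mul p k 0 hp hop] at ht
    simp at ht
    obtain ⟨s, hs, hsum⟩ := bin_rep k t ht
    refine ⟨s.image (fun i => 2 ^ i), ?_, ?_⟩
    · intro d hd
      obtain ⟨i, hi, rfl⟩ := Finset.mem_image.1 hd
      have hik : i ≤ k := by have := hs hi; simp [Finset.mem_range] at this; omega
      rw [Nat.mem_divisors]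
      constructor
      · simpa using pow_dvd_pow 2 hik
      · positivity
    · rw [Finset.sum_image (fun a _ b _ h => Nat.pow_right_injective (le_refl 2) h)]
      exact hsum
  | succ j ih =>
    intro t ht
    have hinj : Function.Injective (fun i => 2 ^ i * p ^ (j + 1)) := by
      intro a b h
      simp only at h
      have := Nat.eq_of_mul_eq_mul_right (Nat.pow_pos hppos) h
      exact Nat.pow_right_injective (le_refl 2) this
    have hndvd : ∀ d ∈ (2 ^ k * p ^ j).divisors,
        ∀ i, d ≠ 2 ^ i * p ^ (j + 1) := by
      intro d hd i heq
      have hdvd : d ∣ 2 ^ k * p ^ j := (Nat.mem_divisors.1 hd).1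
      have hpj : p ^ (j + 1) ∣ 2 ^ k * p ^ j := by
        refine dvd_trans ?_ hdvd
        rw [heq]; exact dvd_mul_left _ _
      have hco : (Nat.Coprime (p ^ (j + 1)) (2 ^ k)) :=
        (Nat.Coprime.pow _ _ (Nat.coprime_two_left.2 hop) : Nat.Coprime (2 ^ k) (p ^ (j + 1))).symm
      have : p ^ (j + 1) ∣ p ^ j := hco.dvd_of_dvd_mul_left hpj
      have := (Nat.pow_dvd_pow_iff_le_right hp1).1 this
      omega
    have himgsum : ∀ S : Finset ℕ, ∑ d ∈ S.image (fun i => 2 ^ i * p ^ (j + 1)), d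
        = (∑ i ∈ S, 2 ^ i) * p ^ (j + 1) := by
      intro S
      rw [Finset.sum_image (fun a _ b _ h => hinj h), Finset.sum_mul]
    have himgdvd : ∀ S : Finset ℕ, S ⊆ range (k + 1) →
        S.image (fun i => 2 ^ i * p ^ (j + 1)) ⊆ (2 ^ k * p ^ (j + 1)).divisors := by
      intro S hS d hd
      obtain ⟨i, hi, rfl⟩ := Finset.mem_image.1 hd
      have hik : i ≤ k := by have := hS hi; simp [Finset.mem_range] at this; omega
      rw [Nat.mem_divisors]
      exact ⟨mul_dvd_mul (pow_dvd_pow 2 hik) dvd_rfl, by positivity⟩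
    have hsub : (2 ^ k * p ^ j).divisors ⊆ (2 ^ k * p ^ (j + 1)).divisors := by
      intro d hd
      rw [Nat.mem_divisors] at hd ⊢
      exact ⟨hd.1.trans (mul_dvd_mul dvd_rfl (pow_dvd_pow p (by omega))), by positivity⟩
    rw [sigma'_two_pow_mul p k (j + 1) hp hop, Finset.sum_range_succ, Nat.mul_add] at ht
    have hsigj : sigma' (2 ^ k * p ^ j) = (2 ^ (k + 1) - 1) * ∑ i ∈ range (j + 1), p ^ i :=
      sigma'_two_pow_mul p k j hp hop
    by_cases hbig : (2 ^ (k + 1) - 1) * p ^ (j + 1) ≤ t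
    · -- use all the divisors 2^i * p^(j+1)
      obtain ⟨s1, hs1, hsum1⟩ := ih (t - (2 ^ (k + 1) - 1) * p ^ (j + 1)) (by omega)
      set big := (range (k + 1)).image (fun i => 2 ^ i * p ^ (j + 1)) with hbigdef
      have hdisj : Disjoint s1 big := by
        rw [Finset.disjoint_left]
        intro d hd hdbig
        obtain ⟨i, _, heq⟩ := Finset.mem_image.1 hdbig
        exact hndvd d (hs1 hd) i heq.symm
      refine ⟨s1 ∪ big, ?_, ?_⟩
      · exact Finset.union_subset (hs1.trans hsub) (himgdvd _ (le_refl _))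
      · rw [Finset.sum_union hdisj, hsum1, hbigdef, himgsum, sum_range_two_pow]
        omega
    · push_neg at hbig
      set q := t / p ^ (j + 1) with hq
      set r := t % p ^ (j + 1) with hr
      have hpj1pos : 0 < p ^ (j + 1) := Nat.pow_pos hppos
      have hqr : q * p ^ (j + 1) + r = t := by
        rw [Nat.mul_comm]; exact Nat.div_add_mod t (p ^ (j + 1))
      have hqle : q ≤ 2 ^ (k + 1) - 1 := by
        by_contra hc
        push_neg at hc
        have : (2 ^ (k + 1) - 1) * p ^ (j + 1) < q * p ^ (j + 1) :=
          (Nat.mul_lt_mul_right hpj1pos).2 hc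
        have : q * p ^ (j + 1) ≤ t := Nat.div_mul_le_self t _ |>.trans_eq' (by rw [hq])
        omega
      have hrle : r ≤ sigma' (2 ^ k * p ^ j) := by
        have hr1 : r < p ^ (j + 1) := Nat.mod_lt _ hpj1pos
        have h1 : p ^ j ≤ ∑ i ∈ range (j + 1), p ^ i :=
          Finset.single_le_sum (f := fun i => p ^ i) (fun i _ => Nat.zero_le _)
            (Finset.self_mem_range_succ j)
        have h2 : p * p ^ j ≤ (2 ^ (k + 1) - 1) * ∑ i ∈ range (j + 1), p ^ i :=
          Nat.mul_le_mul hpk h1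
        have h3 : p ^ (j + 1) = p * p ^ j := by ring
        omega
      obtain ⟨s1, hs1, hsum1⟩ := ih r hrle
      obtain ⟨S, hS, hSsum⟩ := bin_rep k q hqle
      set big := S.image (fun i => 2 ^ i * p ^ (j + 1)) with hbigdef
      have hdisj : Disjoint s1 big := by
        rw [Finset.disjoint_left]
        intro d hd hdbig
        obtain ⟨i, _, heq⟩ := Finset.mem_image.1 hdbig
        exact hndvd d (hs1 hd) i heq.symm
      refine ⟨s1 ∪ big, ?_, ?_⟩
      · exact Finset.union_subset (hs1.trans hsub) (himgdvd _ hS)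
      · rw [Finset.sum_union hdisj, hsum1, hbigdef, himgsum, hSsum]
        omega

lemma geom_sum_mul_pred (p m : ℕ) (hp : 1 ≤ p) :
    (∑ i ∈ range m, p ^ i) * (p - 1) = p ^ m - 1 := by
  induction m with
  | zero => simp
  | succ m ih =>
    rw [Finset.sum_range_succ, Nat.add_mul, ih]
    have h1 : 1 ≤ p ^ m := Nat.one_le_pow _ _ (by omega)
    have h2 : p ^ (m + 1) = p ^ m * p := by ring
    have h3 : p ^ m * (p - 1) = p ^ m * p - p ^ m := by
      rw [Nat.mul_sub, Nat.mul_one]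
    have h4 : p ^ m ≤ p ^ m * p := Nat.le_mul_of_pos_right _ (by omega)
    omega

theorem two_pow_mul_prime_pow_not_weird (k m p : ℕ) (hk : 1 ≤ k) (hm : 1 ≤ m)
    (hp : p.Prime) (hop : Odd p) :
    (sigma' (2 ^ k * p ^ m) < 2 * (2 ^ k * p ^ m) ∨
      sigma' (2 ^ k * p ^ m) = 2 * (2 ^ k * p ^ m) ∨
      (Abundant (2 ^ k * p ^ m) ∧ Pseudoperfect (2 ^ k * p ^ m))) ∧
    ¬ Weird (2 ^ k * p ^ m) := by
  have hp1 : 1 < p := hp.one_lt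
  have hppos : 0 < p := hp.pos
  have main : sigma' (2 ^ k * p ^ m) < 2 * (2 ^ k * p ^ m) ∨
      sigma' (2 ^ k * p ^ m) = 2 * (2 ^ k * p ^ m) ∨
      (Abundant (2 ^ k * p ^ m) ∧ Pseudoperfect (2 ^ k * p ^ m)) := by
    rcases lt_trichotomy (sigma' (2 ^ k * p ^ m)) (2 * (2 ^ k * p ^ m)) with h | h | h
    · exact Or.inl h
    · exact Or.inr (Or.inl h)
    refine Or.inr (Or.inr ⟨h, ?_⟩)
    -- abundant case: build pseudoperfect representation
    set A := ∑ i ∈ range m, p ^ i with hA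
    have hApos : 0 < A := by
      rw [hA]
      exact Finset.sum_pos (fun i _ => Nat.pow_pos hppos) (by simp; omega)
    have hsig : sigma' (2 ^ k * p ^ m) = (2 ^ (k + 1) - 1) * (A + p ^ m) := by
      rw [sigma'_two_pow_mul p k m hp hop, Finset.sum_range_succ, hA]
    have h2k : 2 * 2 ^ k = 2 ^ (k + 1) := by ring
    have h2k1 : 2 ≤ 2 ^ (k + 1) := by
      calc 2 = 2 ^ 1 := by norm_num
      _ ≤ 2 ^ (k + 1) := Nat.pow_le_pow_right (by norm_num) (by omega)
    -- key inequality : p ^ m < (2^(k+1) - 1) * A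
    have hkey : p ^ m < (2 ^ (k + 1) - 1) * A := by
      rw [hsig] at h
      have : 2 * (2 ^ k * p ^ m) = 2 ^ (k + 1) * p ^ m := by rw [← h2k]; ring
      rw [this] at h
      have e1 : (2 ^ (k + 1) - 1) * (A + p ^ m)
          = (2 ^ (k + 1) - 1) * A + (2 ^ (k + 1) - 1) * p ^ m := by ring
      have e2 : (2 ^ (k + 1) - 1) * p ^ m = 2 ^ (k + 1) * p ^ m - p ^ m := by
        rw [Nat.sub_mul, Nat.one_mul]
      have e3 : p ^ m ≤ 2 ^ (k + 1) * p ^ m := Nat.le_mul_of_pos_left _ (by positivity)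
      omega
    -- hence p ≤ 2^(k+1) - 1
    have hpk : p ≤ 2 ^ (k + 1) - 1 := by
      have hgeom : A * (p - 1) = p ^ m - 1 := geom_sum_mul_pred p m (by omega)
      by_contra hc
      push_neg at hc
      have h1 : (2 ^ (k + 1) - 1) * A ≤ (p - 1) * A :=
        Nat.mul_le_mul_right A (by omega)
      have h2 : (p - 1) * A = p ^ m - 1 := by rw [Nat.mul_comm]; exact hgeom
      have h3 : 1 ≤ p ^ m := Nat.one_le_pow _ _ hppos
      omega
    -- p ^ m ≤ sigma' (2^k * p^(m-1))
    have hmm : m - 1 + 1 = m := by omega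
    have hsig' : sigma' (2 ^ k * p ^ (m - 1)) = (2 ^ (k + 1) - 1) * A := by
      rw [sigma'_two_pow_mul p k (m - 1) hp hop, hmm, hA]
    obtain ⟨s1, hs1, hsum1⟩ := practical p hp hop k hpk (m - 1) (p ^ m)
      (by rw [hsig']; omega)
    set big := (range k).image (fun i => 2 ^ i * p ^ m) with hbigdef
    have hinj : Function.Injective (fun i => 2 ^ i * p ^ m) := by
      intro a b hab
      simp only at hab
      exact Nat.pow_right_injective (le_refl 2)
        (Nat.eq_of_mul_eq_mul_right (Nat.pow_pos hppos) hab)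
    have hbigsum : ∑ d ∈ big, d = (2 ^ k - 1) * p ^ m := by
      rw [hbigdef, Finset.sum_image (fun a _ b _ h => hinj h), ← Finset.sum_mul,
        sum_range_two_pow]
    have hndvd : ∀ d ∈ (2 ^ k * p ^ (m - 1)).divisors, d ∉ big := by
      intro d hd hdbig
      obtain ⟨i, _, heq⟩ := Finset.mem_image.1 hdbig
      have hdvd : d ∣ 2 ^ k * p ^ (m - 1) := (Nat.mem_divisors.1 hd).1
      have hpm : p ^ m ∣ 2 ^ k * p ^ (m - 1) := by
        refine dvd_trans ?_ hdvd
        rw [← heq]; exact dvd_mul_left _ _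
      have hco : (Nat.Coprime (p ^ m) (2 ^ k)) :=
        (Nat.Coprime.pow _ _ (Nat.coprime_two_left.2 hop) : Nat.Coprime (2^k) (p^m)).symm
      have : p ^ m ∣ p ^ (m - 1) := hco.dvd_of_dvd_mul_left hpm
      have := (Nat.pow_dvd_pow_iff_le_right hp1).1 this
      omega
    have hdisj : Disjoint s1 big := by
      rw [Finset.disjoint_left]
      exact fun d hd hdbig => hndvd d (hs1 hd) hdbig
    have hnpos : 0 < 2 ^ k * p ^ m := by positivity
    refine ⟨s1 ∪ big, ?_, ?_⟩
    · intro d hd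
      rw [Nat.mem_properDivisors]
      rcases Finset.mem_union.1 hd with hd1 | hd2
      · have hmem := Nat.mem_divisors.1 (hs1 hd1)
        have hdn : d ∣ 2 ^ k * p ^ m :=
          hmem.1.trans (mul_dvd_mul dvd_rfl (pow_dvd_pow p (by omega)))
        have hdle : d ≤ 2 ^ k * p ^ (m - 1) :=
          Nat.le_of_dvd (by positivity) hmem.1
        have hlt : 2 ^ k * p ^ (m - 1) < 2 ^ k * p ^ m := by
          exact (Nat.mul_lt_mul_left (Nat.pow_pos (by norm_num))).2
            (Nat.pow_lt_pow_right hp1 (by omega))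
        exact ⟨hdn, by omega⟩
      · obtain ⟨i, hi, rfl⟩ := Finset.mem_image.1 hd2
        have hik : i < k := by simpa using hi
        refine ⟨mul_dvd_mul (pow_dvd_pow 2 (by omega)) dvd_rfl, ?_⟩
        exact (Nat.mul_lt_mul_right (Nat.pow_pos hppos)).2
          (Nat.pow_lt_pow_right (by norm_num) hik)
    · rw [Finset.sum_union hdisj, hsum1, hbigsum]
      have h1 : 1 ≤ 2 ^ k := Nat.one_le_two_pow
      have e1 : (2 ^ k - 1) * p ^ m = 2 ^ k * p ^ m - p ^ m := by
        rw [Nat.sub_mul, Nat.one_mul]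
      have e2 : p ^ m ≤ 2 ^ k * p ^ m := Nat.le_mul_of_pos_left _ (by positivity)
      omega
  refine ⟨main, ?_⟩
  rintro ⟨hab, hnps⟩
  rcases main with h | h | h
  · exact absurd hab (by rw [Abundant]; omega)
  · exact absurd hab (by rw [Abundant]; omega)
  · exact hnps h.2
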